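/- arXiv:2102.07223 — 8 statements merged into one kernel-verified Lean document; each statement's English description precedes it below -/
import Mathlib

section
/- Let v ∈ ℝⁿ with every component vᵢ > 1/√2, and define p_v componentwise by (p_v)ᵢ = (vᵢ − vᵢ³)/(2vᵢ² − 1). Let d_x, d_s ∈ ℝⁿ with d_x + d_s = p_v, and set q_v = d_x − d_s. Then for all α ∈ [0,1], componentwise, v² + α·v·(d_x + d_s) + α²·d_x·d_s ≥ (1−α)·v² + α²·(1 + p_v²/4 − q_v²/4). -/
theorem stmt2 (n : ℕ) (v dx ds : Fin n → ℝ)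
    (hv : ∀ i, v i > 1 / Real.sqrt 2)
    (pv : Fin n → ℝ) (hpv : ∀ i, pv i = (v i - (v i) ^ 3) / (2 * (v i) ^ 2 - 1))
    (hds : dx + ds = pv)
    (qv : Fin n → ℝ) (hqv : qv = dx - ds)
    (α : ℝ) (hα : α ∈ Set.Icc (0 : ℝ) 1) :
    ∀ i, (v i) ^ 2 + α * v i * (dx i + ds i) + α ^ 2 * (dx i * ds i) ≥
      (1 - α) * (v i) ^ 2 + α ^ 2 * (1 + (pv i) ^ 2 / 4 - (qv i) ^ 2 / 4) := by
  obtain ⟨hα0, hα1⟩ := hα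
  intro i
  have hsum : dx i + ds i = pv i := congrFun hds i
  have hq : qv i = dx i - ds i := by rw [hqv]; rfl
  set t := v i with ht
  have hs2 : Real.sqrt 2 > 0 := Real.sqrt_pos.mpr (by norm_num)
  have ht0 : t > 0 := lt_trans (by positivity) (hv i)
  have ht2 : t ^ 2 > 1 / 2 := by
    have h1 : (1 / Real.sqrt 2) ^ 2 = 1 / 2 := by
      rw [div_pow, Real.sq_sqrt (by norm_num : (2:ℝ) ≥ 0)]; norm_num
    calc (1:ℝ)/2 = (1 / Real.sqrt 2) ^ 2 := h1.symm
      _ < t ^ 2 := by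
        apply pow_lt_pow_left₀ (hv i) (by positivity) (by norm_num)
  have hden : 2 * t ^ 2 - 1 > 0 := by linarith
  have hpvi : pv i * (2 * t ^ 2 - 1) = t - t ^ 3 := by
    rw [hpv i, div_mul_cancel₀ _ (ne_of_gt hden)]
  -- key: t^2 + t * pv i ≥ 1
  have hkey : t ^ 2 + t * pv i ≥ 1 := by
    rw [ge_iff_le, ← sub_nonneg]
    have : t ^ 2 + t * pv i - 1 = (t ^ 2 - 1) ^ 2 / (2 * t ^ 2 - 1) := by
      have hne : 2 * t ^ 2 - 1 ≠ 0 := ne_of_gt hden; rw [hpv i, ← ht, eq_div_iff hne]; linear_combination t * div_mul_cancel₀ (t - t ^ 3) hne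
    rw [this]; positivity
  have hdxds : dx i * ds i = ((pv i) ^ 2 - (qv i) ^ 2) / 4 := by
    rw [hq, ← hsum]; ring
  have haa : α ^ 2 ≤ α := by nlinarith
  rw [hsum, hdxds]
  nlinarith [mul_le_mul_of_nonneg_right haa (le_of_lt (lt_of_lt_of_le (by linarith : (0:ℝ) < 1) hkey)), sq_nonneg α]
end

section
/- Let v ∈ ℝⁿ with vᵢ > 1/√2 for all i, define p_v = (v − v³)/(2v² − e) componentwise, δ = ‖p_v‖/2, and let d_x, d_s ∈ ℝⁿ satisfy d_x + d_s = p_v. Set q_v = d_x − d_s and ω = (‖d_x‖² + ‖d_s‖²)/2. If δ² + ω < 1, then componentwise |q_v²/4 − p_v²/4| < 1 (i.e., ‖(q_v² − p_v²)/4‖_∞ < 1). -/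
theorem stmt4 (n : ℕ) (v dx ds : Fin n → ℝ)
    (hv : ∀ i, v i > 1 / Real.sqrt 2)
    (pv : Fin n → ℝ) (hpv : ∀ i, pv i = (v i - (v i) ^ 3) / (2 * (v i) ^ 2 - 1))
    (hds : dx + ds = pv)
    (qv : Fin n → ℝ) (hqv : qv = dx - ds)
    (δ ω : ℝ) (hδ : δ = Real.sqrt (∑ i, (pv i) ^ 2) / 2)
    (hω : ω = ((∑ i, (dx i) ^ 2) + ∑ i, (ds i) ^ 2) / 2)
    (h : δ ^ 2 + ω < 1) :
    ∀ i, |(qv i) ^ 2 / 4 - (pv i) ^ 2 / 4| < 1 := by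
  intro i
  have hpi : dx i + ds i = pv i := by simpa using congrFun hds i
  have hq : qv i = dx i - ds i := by rw [hqv]; simp
  have hx : dx i ^ 2 ≤ ∑ j, dx j ^ 2 :=
    Finset.single_le_sum (fun j _ => sq_nonneg (dx j)) (Finset.mem_univ i)
  have hs : ds i ^ 2 ≤ ∑ j, ds j ^ 2 :=
    Finset.single_le_sum (fun j _ => sq_nonneg (ds j)) (Finset.mem_univ i)
  have hδ0 : 0 ≤ δ ^ 2 := sq_nonneg _
  have h1 : qv i ^ 2 / 4 - pv i ^ 2 / 4 = -(dx i * ds i) := by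
    rw [hq, ← hpi]; ring
  have hkey : (dx i ^ 2 + ds i ^ 2) / 2 ≤ ω := by rw [hω]; linarith
  have hω1 : ω < 1 := by linarith
  rw [h1, abs_lt]
  constructor <;>
    nlinarith [sq_nonneg (dx i + ds i), sq_nonneg (dx i - ds i)]
end

section
/- Let x, s, Δx, Δs ∈ ℝⁿ with x > 0, s > 0 (componentwise). Define x(α) = x + αΔx and s(α) = s + αΔs. If x(α)·s(α) > 0 componentwise for all α ∈ [0,1], then x(1) > 0 and s(1) > 0 componentwise. -/
lemma aux5 (x0 d : ℝ) (h0 : 0 < x0)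
    (hne : ∀ α ∈ Set.Icc (0:ℝ) 1, x0 + α * d ≠ 0) : 0 < x0 + d := by
  by_contra hle
  push_neg at hle
  have hc : ContinuousOn (fun α : ℝ => x0 + α * d) (Set.Icc 0 1) :=
    (by continuity : Continuous fun α : ℝ => x0 + α * d).continuousOn
  have hmem : (0:ℝ) ∈ Set.Icc (x0 + 1 * d) (x0 + 0 * d) := by
    constructor <;> simp <;> linarith
  obtain ⟨α, hα, hval⟩ := intermediate_value_Icc' (by norm_num : (0:ℝ) ≤ 1) hc hmem
  exact hne α hα hval

theorem stmt5 (n : ℕ) (x s Δx Δs : Fin n → ℝ)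
    (hx : ∀ i, 0 < x i) (hs : ∀ i, 0 < s i)
    (h : ∀ α ∈ Set.Icc (0 : ℝ) 1, ∀ i, 0 < (x i + α * Δx i) * (s i + α * Δs i)) :
    (∀ i, 0 < x i + Δx i) ∧ (∀ i, 0 < s i + Δs i) := by
  constructor <;> intro i
  · exact aux5 _ _ (hx i) (fun α hα h0 => by
      have := h α hα i; rw [h0] at this; simp at this)
  · exact aux5 _ _ (hs i) (fun α hα h0 => by
      have := h α hα i; rw [h0] at this; simp at this)
end

section
/- Let v ∈ ℝⁿ with vᵢ > 1/√2 for all i, p_v = (v − v³)/(2v² − e) componentwise, δ = ‖p_v‖/2, d_x + d_s = p_v, q_v = d_x − d_s, ω = (‖d_x‖² + ‖d_s‖²)/2, and θ ∈ (0,1). Define v₊² = (v² + v·p_v + p_v²/4 − q_v²/4)/(1−θ) componentwise. If δ² + ω < (1−θ)/2, then min_i (v₊)ᵢ ≥ √((1 − δ² − ω)/(1−θ)) > 1/√2. -/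
theorem stmt7 (n : ℕ) (v dx ds : Fin n → ℝ)
    (hv : ∀ i, v i > 1 / Real.sqrt 2)
    (pv : Fin n → ℝ) (hpv : ∀ i, pv i = (v i - (v i) ^ 3) / (2 * (v i) ^ 2 - 1))
    (hds : dx + ds = pv)
    (qv : Fin n → ℝ) (hqv : qv = dx - ds)
    (δ ω θ : ℝ) (hδ : δ = Real.sqrt (∑ i, (pv i) ^ 2) / 2)
    (hω : ω = ((∑ i, (dx i) ^ 2) + ∑ i, (ds i) ^ 2) / 2)
    (hθ : θ ∈ Set.Ioo (0 : ℝ) 1)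
    (vplus : Fin n → ℝ)
    (hvp : ∀ i, vplus i =
      Real.sqrt (((v i) ^ 2 + v i * pv i + (pv i) ^ 2 / 4 - (qv i) ^ 2 / 4) / (1 - θ)))
    (h : δ ^ 2 + ω < (1 - θ) / 2) :
    (∀ i, vplus i ≥ Real.sqrt ((1 - δ ^ 2 - ω) / (1 - θ))) ∧
    Real.sqrt ((1 - δ ^ 2 - ω) / (1 - θ)) > 1 / Real.sqrt 2 := by
  obtain ⟨hθ0, hθ1⟩ := hθ
  have h1θ : (0:ℝ) < 1 - θ := by linarith
  have hδ0 : 0 ≤ δ := by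
    rw [hδ]; positivity
  have hs2 : Real.sqrt 2 ^ 2 = 2 := Real.sq_sqrt (by norm_num)
  have hs2pos : (0:ℝ) < Real.sqrt 2 := by positivity
  constructor
  · intro i
    have hvi := hv i
    have hv2 : (v i) ^ 2 > 1 / 2 := by
      have : (1 / Real.sqrt 2) ^ 2 = 1 / 2 := by
        rw [div_pow, hs2]; norm_num
      calc (v i)^2 > (1 / Real.sqrt 2)^2 := by
            apply pow_lt_pow_left₀ hvi (by positivity) (by norm_num)
        _ = 1/2 := this
    have hden : 2 * (v i) ^ 2 - 1 > 0 := by linarith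
    -- v² + v·pv ≥ 1
    have hkey : (v i) ^ 2 + v i * pv i ≥ 1 := by
      rw [hpv i]
      rw [ge_iff_le, ← sub_nonneg]
      have : (v i) ^ 2 + v i * ((v i - (v i) ^ 3) / (2 * (v i) ^ 2 - 1)) - 1
          = ((v i)^2 - 1)^2 / (2 * (v i)^2 - 1) := by
        rw [eq_div_iff hden.ne', sub_mul, add_mul, mul_assoc, div_mul_cancel₀ _ hden.ne']; ring
      rw [this]
      positivity
    -- pv i = dx i + ds i
    have hpvi : pv i = dx i + ds i := by
      have := congrFun hds i; simpa using this.symm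
    have hqvi : qv i = dx i - ds i := by rw [hqv]; simp
    -- ω ≥ (dx i ^2 + ds i ^2)/2
    have hωi : (dx i ^ 2 + ds i ^ 2) / 2 ≤ ω := by
      rw [hω]
      have h1 : dx i ^ 2 ≤ ∑ j, dx j ^ 2 :=
        Finset.single_le_sum (fun j _ => sq_nonneg (dx j)) (Finset.mem_univ i)
      have h2 : ds i ^ 2 ≤ ∑ j, ds j ^ 2 :=
        Finset.single_le_sum (fun j _ => sq_nonneg (ds j)) (Finset.mem_univ i)
      linarith
    have hnum : (v i) ^ 2 + v i * pv i + (pv i) ^ 2 / 4 - (qv i) ^ 2 / 4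
        ≥ 1 - δ ^ 2 - ω := by
      have : (pv i) ^ 2 / 4 - (qv i) ^ 2 / 4 = dx i * ds i := by
        rw [hpvi, hqvi]; ring
      nlinarith [sq_nonneg (dx i + ds i), sq_nonneg δ]
    rw [hvp i]
    apply Real.sqrt_le_sqrt
    exact div_le_div_of_nonneg_right hnum h1θ.le
  · have h12 : (1:ℝ)/2 < (1 - δ ^ 2 - ω) / (1 - θ) := by
      rw [lt_div_iff₀ h1θ]
      nlinarith
    have : (1:ℝ) / Real.sqrt 2 = Real.sqrt (1/2) := by
      rw [one_div, one_div, ← Real.sqrt_inv]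
    rw [this]
    exact Real.sqrt_lt_sqrt (by norm_num) h12
end

section
/- Let v₊ ∈ ℝⁿ with (v₊)ᵢ > 1/√2 for all i, and define δ(v₊) = ½‖(v₊ − v₊³)/(2v₊² − e)‖ (componentwise operations, Euclidean norm). Then δ(v₊) ≤ (min(v₊) / (2(2·min(v₊)² − 1))) · ‖e − v₊²‖, where min(v₊) = min_i (v₊)ᵢ. -/
theorem stmt8 (n : ℕ) (hn : 0 < n) (vp : Fin n → ℝ)
    (hvp : ∀ i, vp i > 1 / Real.sqrt 2) :
    Real.sqrt (∑ i, ((vp i - (vp i) ^ 3) / (2 * (vp i) ^ 2 - 1)) ^ 2) / 2 ≤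
      ((⨅ i, vp i) / (2 * (2 * (⨅ i, vp i) ^ 2 - 1))) *
        Real.sqrt (∑ i, (1 - (vp i) ^ 2) ^ 2) := by
  have h2 : Real.sqrt 2 > 0 := Real.sqrt_pos.mpr (by norm_num)
  have hsq : Real.sqrt 2 ^ 2 = 2 := Real.sq_sqrt (by norm_num)
  have hvpos : ∀ i, vp i > 0 := fun i => lt_trans (by positivity) (hvp i)
  have hpos : ∀ i, 2 * (vp i) ^ 2 - 1 > 0 := by
    intro i
    have h : 1 < vp i * Real.sqrt 2 := by
      rw [← div_lt_iff₀ h2]; exact hvp i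
    nlinarith [h, hsq, hvpos i]
  haveI : Nonempty (Fin n) := ⟨⟨0, hn⟩⟩
  obtain ⟨i0, hi0⟩ := Finite.exists_min vp
  set m := ⨅ i, vp i with hm
  have hmeq : m = vp i0 :=
    le_antisymm (ciInf_le (Finite.bddBelow_range vp) i0) (le_ciInf hi0)
  have hmgt : m > 1 / Real.sqrt 2 := hmeq ▸ hvp i0
  have hmpos : m > 0 := lt_trans (by positivity) hmgt
  have hmden : 2 * m ^ 2 - 1 > 0 := by
    have h : 1 < m * Real.sqrt 2 := by rw [← div_lt_iff₀ h2]; exact hmgt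
    nlinarith [h, hsq, hmpos]
  set c := m / (2 * m ^ 2 - 1) with hc
  have hcnn : 0 ≤ c := le_of_lt (div_pos hmpos hmden)
  have key : ∀ i, ((vp i - (vp i) ^ 3) / (2 * (vp i) ^ 2 - 1)) ^ 2
      ≤ c ^ 2 * (1 - (vp i) ^ 2) ^ 2 := by
    intro i
    have hle : vp i / (2 * (vp i) ^ 2 - 1) ≤ c := by
      rw [hc, div_le_div_iff₀ (hpos i) hmden]
      have hmle : m ≤ vp i := hmeq ▸ hi0 i
      nlinarith [mul_nonneg (sub_nonneg.mpr hmle)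
        (add_pos (mul_pos (mul_pos two_pos hmpos) (hvpos i)) one_pos).le]
    have hfact : (vp i - (vp i) ^ 3) / (2 * (vp i) ^ 2 - 1)
        = (vp i / (2 * (vp i) ^ 2 - 1)) * (1 - (vp i) ^ 2) := by
      field_simp
    rw [hfact, mul_pow]
    have hq : 0 < vp i / (2 * (vp i) ^ 2 - 1) := div_pos (hvpos i) (hpos i)
    have h1 : (vp i / (2 * (vp i) ^ 2 - 1)) ^ 2 ≤ c ^ 2 := by nlinarith
    exact mul_le_mul_of_nonneg_right h1 (sq_nonneg _)
  have hsum : ∑ i, ((vp i - (vp i) ^ 3) / (2 * (vp i) ^ 2 - 1)) ^ 2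
      ≤ c ^ 2 * ∑ i, (1 - (vp i) ^ 2) ^ 2 := by
    rw [Finset.mul_sum]; exact Finset.sum_le_sum fun i _ => key i
  calc Real.sqrt (∑ i, ((vp i - (vp i) ^ 3) / (2 * (vp i) ^ 2 - 1)) ^ 2) / 2
      ≤ Real.sqrt (c ^ 2 * ∑ i, (1 - (vp i) ^ 2) ^ 2) / 2 := by
        have := Real.sqrt_le_sqrt hsum
        linarith
    _ = (c * Real.sqrt (∑ i, (1 - (vp i) ^ 2) ^ 2)) / 2 := by
        rw [Real.sqrt_mul (sq_nonneg c), Real.sqrt_sq hcnn]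
    _ = (c / 2) * Real.sqrt (∑ i, (1 - (vp i) ^ 2) ^ 2) := by ring
    _ = (m / (2 * (2 * m ^ 2 - 1))) * Real.sqrt (∑ i, (1 - (vp i) ^ 2) ^ 2) := by
        rw [hc, div_div, mul_comm (2 * m ^ 2 - 1) 2]
end

section
/- Let v ∈ ℝⁿ with vᵢ > 1/√2 for all i, p_v = (v − v³)/(2v² − e), δ = ‖p_v‖/2, d_x + d_s = p_v, q_v = d_x − d_s, ω = (‖d_x‖² + ‖d_s‖²)/2, θ ∈ (0,1), and v₊² = (e + ((9v² − 4e)/v²)·(p_v²/4) − q_v²/4)/(1−θ) componentwise. Then ‖e − v₊²‖ ≤ (θ√n + 10δ² + ω)/(1−θ). -/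
lemma sqrt_sum_sq_add_le {n : ℕ} (f g : EuclideanSpace ℝ (Fin n)) :
    Real.sqrt (∑ i, (f i + g i) ^ 2) ≤
      Real.sqrt (∑ i, (f i) ^ 2) + Real.sqrt (∑ i, (g i) ^ 2) := by
  have h := norm_add_le f g
  simp only [EuclideanSpace.norm_eq, Real.norm_eq_abs, sq_abs, PiLp.add_apply] at h
  exact h

lemma sqrt_sum_sq_le {n : ℕ} (a : Fin n → ℝ) (ha : ∀ i, 0 ≤ a i) :
    Real.sqrt (∑ i, (a i) ^ 2) ≤ ∑ i, a i := by
  have hs : (0:ℝ) ≤ ∑ i, a i := Finset.sum_nonneg fun i _ => ha i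
  rw [show (∑ i, a i) = Real.sqrt ((∑ i, a i) ^ 2) from (Real.sqrt_sq hs).symm]
  apply Real.sqrt_le_sqrt
  have : ∀ i ∈ Finset.univ, a i ^ 2 ≤ a i * ∑ j, a j := by
    intro i _
    have : a i ≤ ∑ j, a j := Finset.single_le_sum (fun j _ => ha j) (Finset.mem_univ i)
    nlinarith [ha i]
  calc ∑ i, a i ^ 2 ≤ ∑ i, a i * ∑ j, a j := Finset.sum_le_sum this
    _ = (∑ i, a i) ^ 2 := by rw [← Finset.sum_mul]; ring

theorem stmt9 (n : ℕ) (v dx ds : Fin n → ℝ)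
    (hv : ∀ i, v i > 1 / Real.sqrt 2)
    (pv : Fin n → ℝ) (hpv : ∀ i, pv i = (v i - (v i) ^ 3) / (2 * (v i) ^ 2 - 1))
    (hds : dx + ds = pv)
    (qv : Fin n → ℝ) (hqv : qv = dx - ds)
    (δ ω θ : ℝ) (hδ : δ = Real.sqrt (∑ i, (pv i) ^ 2) / 2)
    (hω : ω = ((∑ i, (dx i) ^ 2) + ∑ i, (ds i) ^ 2) / 2)
    (hθ : θ ∈ Set.Ioo (0 : ℝ) 1)
    (vpsq : Fin n → ℝ)
    (hvp : ∀ i, vpsq i =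
      (1 + ((9 * (v i) ^ 2 - 4) / (v i) ^ 2) * ((pv i) ^ 2 / 4) - (qv i) ^ 2 / 4) / (1 - θ)) :
    Real.sqrt (∑ i, (1 - vpsq i) ^ 2) ≤ (θ * Real.sqrt n + 10 * δ ^ 2 + ω) / (1 - θ) := by
  obtain ⟨hθ0, hθ1⟩ := hθ
  have h1θ : (0:ℝ) < 1 - θ := by linarith
  have hv2 : ∀ i, (1:ℝ)/2 < (v i) ^ 2 := by
    intro i
    have hq : (1 / Real.sqrt 2) ^ 2 = 1 / 2 := by
      rw [div_pow, one_pow, Real.sq_sqrt (by norm_num : (0:ℝ) ≤ 2)]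
    have := pow_lt_pow_left₀ (hv i) (by positivity) (two_ne_zero)
    linarith [hq ▸ this]
  set c : Fin n → ℝ := fun i => (9 * (v i) ^ 2 - 4) / (v i) ^ 2 with hc
  have hv2pos : ∀ i, (0:ℝ) < (v i) ^ 2 := fun i => by linarith [hv2 i]
  have hc0 : ∀ i, 0 ≤ c i := fun i => div_nonneg (by linarith [hv2 i]) (le_of_lt (hv2pos i))
  have hc9 : ∀ i, c i ≤ 9 := fun i => by
    rw [hc]; rw [div_le_iff₀ (hv2pos i)]; nlinarith [hv2 i]
  have hpvi : ∀ i, pv i = dx i + ds i := fun i => (congrFun hds i).symm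
  have hqvi : ∀ i, qv i = dx i - ds i := fun i => by rw [hqv]; rfl
  have hP : (0:ℝ) ≤ ∑ i, (pv i) ^ 2 := Finset.sum_nonneg fun i _ => sq_nonneg _
  have hδ2 : δ ^ 2 = (∑ i, (pv i) ^ 2) / 4 := by
    rw [hδ, div_pow, Real.sq_sqrt hP]; norm_num
  have hδnn : 0 ≤ δ ^ 2 := sq_nonneg δ
  have hQ : ∑ i, (qv i) ^ 2 = 4 * ω - 4 * δ ^ 2 := by
    have h1 : ∀ i ∈ Finset.univ, (qv i) ^ 2
        = 2 * (dx i) ^ 2 + 2 * (ds i) ^ 2 - (pv i) ^ 2 := by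
      intro i _; rw [hqvi i, hpvi i]; ring
    rw [Finset.sum_congr rfl h1, hδ2, hω, Finset.sum_sub_distrib, Finset.sum_add_distrib,
      ← Finset.mul_sum, ← Finset.mul_sum]
    ring
  set a : Fin n → ℝ := fun i => c i * (pv i) ^ 2 / 4 with ha
  set b : Fin n → ℝ := fun i => (qv i) ^ 2 / 4 with hb
  have hw : ∀ i, 1 - vpsq i = ((-θ) + (-(a i) + b i)) / (1 - θ) := by
    intro i; rw [hvp i, ha, hb, hc]
    field_simp
    ring
  have hsum : ∑ i, (1 - vpsq i) ^ 2
      = (∑ i, ((-θ) + (-(a i) + b i)) ^ 2) * (1 / (1 - θ)) ^ 2 := by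
    rw [Finset.sum_mul]
    refine Finset.sum_congr rfl fun i _ => ?_
    rw [hw i]; field_simp
  have hW : (0:ℝ) ≤ ∑ i, ((-θ) + (-(a i) + b i)) ^ 2 :=
    Finset.sum_nonneg fun i _ => sq_nonneg _
  rw [hsum, Real.sqrt_mul hW, Real.sqrt_sq (by positivity : (0:ℝ) ≤ 1 / (1 - θ)),
    div_eq_mul_one_div (θ * Real.sqrt n + 10 * δ ^ 2 + ω) (1 - θ)]
  apply mul_le_mul_of_nonneg_right _ (by positivity : (0:ℝ) ≤ 1 / (1 - θ))
  -- main bound on the unscaled norm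
  have t1 : Real.sqrt (∑ i, ((-θ) + (-(a i) + b i)) ^ 2)
      ≤ Real.sqrt (∑ _i : Fin n, (-θ) ^ 2) + Real.sqrt (∑ i, (-(a i) + b i) ^ 2) :=
    sqrt_sum_sq_add_le (WithLp.toLp 2 (fun _ => -θ)) (WithLp.toLp 2 (fun i => -(a i) + b i))
  have t2 : Real.sqrt (∑ i, (-(a i) + b i) ^ 2)
      ≤ Real.sqrt (∑ i, (-(a i)) ^ 2) + Real.sqrt (∑ i, (b i) ^ 2) :=
    sqrt_sum_sq_add_le (WithLp.toLp 2 (fun i => -(a i))) (WithLp.toLp 2 b)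
  have e1 : Real.sqrt (∑ _i : Fin n, (-θ) ^ 2) = θ * Real.sqrt n := by
    have h : ∑ _i : Fin n, (-θ) ^ 2 = (n : ℝ) * θ ^ 2 := by
      rw [Finset.sum_const, Finset.card_univ, Fintype.card_fin, nsmul_eq_mul]; ring
    rw [h, Real.sqrt_mul (by positivity), Real.sqrt_sq hθ0.le]; ring
  have e2 : Real.sqrt (∑ i, (-(a i)) ^ 2) = Real.sqrt (∑ i, (a i) ^ 2) := by
    congr 1; exact Finset.sum_congr rfl fun i _ => by ring
  have hanonneg : ∀ i, 0 ≤ a i := fun i => by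
    have h3 := hc0 i; have h4 := sq_nonneg (pv i); rw [ha]; positivity
  have hA : Real.sqrt (∑ i, (a i) ^ 2) ≤ 9 * δ ^ 2 := by
    have h1 := sqrt_sum_sq_le a hanonneg
    have h2 : ∑ i, a i ≤ 9 * δ ^ 2 := by
      have h3 : ∀ i ∈ Finset.univ, a i ≤ 9 / 4 * (pv i) ^ 2 := by
        intro i _
        have := hc9 i; have := sq_nonneg (pv i); have := hc0 i
        rw [ha]; nlinarith
      calc ∑ i, a i ≤ ∑ i, 9 / 4 * (pv i) ^ 2 := Finset.sum_le_sum h3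
        _ = 9 * δ ^ 2 := by rw [hδ2, ← Finset.mul_sum]; ring
    linarith
  have hbnonneg : ∀ i, 0 ≤ b i := fun i => by
    have := sq_nonneg (qv i); rw [hb]; positivity
  have hB : Real.sqrt (∑ i, (b i) ^ 2) ≤ ω - δ ^ 2 := by
    have h1 := sqrt_sum_sq_le b hbnonneg
    have h2 : ∑ i, b i = ω - δ ^ 2 := by
      have : ∑ i, b i = (∑ i, (qv i) ^ 2) / 4 := by
        rw [Finset.sum_div]
      rw [this, hQ]; ring
    linarith
  calc Real.sqrt (∑ i, ((-θ) + (-(a i) + b i)) ^ 2)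
      ≤ Real.sqrt (∑ _i : Fin n, (-θ) ^ 2) + Real.sqrt (∑ i, (-(a i) + b i) ^ 2) := t1
    _ ≤ θ * Real.sqrt n + 10 * δ ^ 2 + ω := by
        rw [e1]
        have := e2 ▸ t2
        linarith
end

section
/- Let v ∈ ℝⁿ with vᵢ > 1/√2 for all i and δ(v) = ½‖(v − v³)/(2v² − e)‖. Then ‖v‖ ≤ √n + 4δ(v). -/
lemma ptwise (x : ℝ) (hx : x > 1 / Real.sqrt 2) :
    (x - 1) ^ 2 ≤ 4 * ((x - x ^ 3) / (2 * x ^ 2 - 1)) ^ 2 := by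
  have h2 : (0:ℝ) < Real.sqrt 2 := Real.sqrt_pos.mpr (by norm_num)
  have hx0 : 0 < x := lt_trans (by positivity) hx
  have hsq : (1 / Real.sqrt 2) ^ 2 = 1 / 2 := by
    rw [div_pow, Real.sq_sqrt (by norm_num : (2:ℝ) ≥ 0)]; norm_num
  have hx2 : x ^ 2 > 1 / 2 := by
    calc x ^ 2 > (1 / Real.sqrt 2) ^ 2 := by
          exact pow_lt_pow_left₀ hx (by positivity) (by norm_num)
      _ = 1 / 2 := hsq
  have hd : 2 * x ^ 2 - 1 > 0 := by linarith
  rw [div_pow, ← mul_div_assoc, le_div_iff₀ (by positivity)]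
  nlinarith [sq_nonneg (x - 1), sq_nonneg (x + 1), mul_pos hx0 hd,
    sq_nonneg ((x-1)*(2*x^2-1)), mul_nonneg (sq_nonneg (x-1)) hd.le]

theorem stmt11 (n : ℕ) (v : Fin n → ℝ) (hv : ∀ i, v i > 1 / Real.sqrt 2)
    (δ : ℝ)
    (hδ : δ = Real.sqrt (∑ i, ((v i - (v i) ^ 3) / (2 * (v i) ^ 2 - 1)) ^ 2) / 2) :
    Real.sqrt (∑ i, (v i) ^ 2) ≤ Real.sqrt n + 4 * δ := by
  set V : EuclideanSpace ℝ (Fin n) := WithLp.toLp 2 v with hV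
  set E : EuclideanSpace ℝ (Fin n) := WithLp.toLp 2 (fun _ => (1:ℝ)) with hE
  have hnormV : Real.sqrt (∑ i, (v i) ^ 2) = ‖V‖ := by
    rw [EuclideanSpace.norm_eq]
    congr 1; apply Finset.sum_congr rfl; intro i _
    rw [Real.norm_eq_abs, sq_abs]
  have hnormE : ‖E‖ = Real.sqrt n := by
    rw [EuclideanSpace.norm_eq]
    simp [hE]
  have htri : ‖V‖ ≤ ‖E‖ + ‖V - E‖ := by
    calc ‖V‖ = ‖E + (V - E)‖ := by rw [add_sub_cancel]
      _ ≤ ‖E‖ + ‖V - E‖ := norm_add_le _ _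
  have hVE : ‖V - E‖ = Real.sqrt (∑ i, (v i - 1) ^ 2) := by
    rw [EuclideanSpace.norm_eq]
    congr 1; apply Finset.sum_congr rfl; intro i _
    simp [hV, hE, Real.norm_eq_abs, sq_abs]
  have hkey : Real.sqrt (∑ i, (v i - 1) ^ 2) ≤ 4 * δ := by
    rw [hδ]
    have h1 : ∑ i, (v i - 1) ^ 2 ≤ 4 * ∑ i, ((v i - (v i) ^ 3) / (2 * (v i) ^ 2 - 1)) ^ 2 := by
      rw [Finset.mul_sum]
      exact Finset.sum_le_sum fun i _ => ptwise (v i) (hv i)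
    calc Real.sqrt (∑ i, (v i - 1) ^ 2)
        ≤ Real.sqrt (4 * ∑ i, ((v i - (v i) ^ 3) / (2 * (v i) ^ 2 - 1)) ^ 2) :=
          Real.sqrt_le_sqrt h1
      _ = 2 * Real.sqrt (∑ i, ((v i - (v i) ^ 3) / (2 * (v i) ^ 2 - 1)) ^ 2) := by
          rw [show (4:ℝ) = 2^2 by norm_num, Real.sqrt_mul (by positivity),
            Real.sqrt_sq (by norm_num : (0:ℝ) ≤ 2)]
      _ = 4 * (Real.sqrt (∑ i, ((v i - (v i) ^ 3) / (2 * (v i) ^ 2 - 1)) ^ 2) / 2) := by ring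
  rw [hnormV]
  calc ‖V‖ ≤ ‖E‖ + ‖V - E‖ := htri
    _ ≤ Real.sqrt n + 4 * δ := by rw [hnormE, hVE]; linarith
end

section
/- Let d_x lie in the affine space N + q and d_s in N^⊥ + q for a linear subspace N of ℝⁿ and q ∈ ℝⁿ, with d_x + d_s = p. Then ‖d_x‖² + ‖d_s‖² ≤ ‖q‖² + (‖q‖ + ‖p‖)². -/
theorem stmt18 (n : ℕ) (N : Submodule ℝ (EuclideanSpace ℝ (Fin n)))
    (q p dx ds : EuclideanSpace ℝ (Fin n))
    (hx : dx - q ∈ N) (hs : ds - q ∈ Nᗮ) (hsum : dx + ds = p) :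
    ‖dx‖ ^ 2 + ‖ds‖ ^ 2 ≤ ‖q‖ ^ 2 + (‖q‖ + ‖p‖) ^ 2 := by
  have horth : (inner ℝ (dx - q) (ds - q) : ℝ) = 0 :=
    (Submodule.mem_orthogonal N (ds - q)).mp hs (dx - q) hx
  have key : ‖dx‖ ^ 2 + ‖ds‖ ^ 2 = ‖q‖ ^ 2 + ‖p - q‖ ^ 2 := by
    have hdx : dx = (dx - q) + q := by abel
    have hds : ds = (ds - q) + q := by abel
    have hpq : p - q = (dx - q) + ((ds - q) + q) := by rw [← hsum]; abel
    rw [hpq]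
    nth_rewrite 1 [hdx]
    nth_rewrite 1 [hds]
    rw [norm_add_sq_real, norm_add_sq_real, norm_add_sq_real, norm_add_sq_real,
      inner_add_right, horth]
    ring
  rw [key]
  have h1 : ‖p - q‖ ≤ ‖q‖ + ‖p‖ := by
    calc ‖p - q‖ ≤ ‖p‖ + ‖q‖ := norm_sub_le p q
    _ = ‖q‖ + ‖p‖ := by ring
  have h2 : ‖p - q‖ ^ 2 ≤ (‖q‖ + ‖p‖) ^ 2 :=
    pow_le_pow_left₀ (norm_nonneg _) h1 2
  linarith
end
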